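/- Let X be a normed space and C ⊆ X a non-zero normal wedge which is complete as a metric space in the norm topology. Let T : C → C be bounded and positively homogeneous, and assume in addition that either (i) T is monotone on C (with respect to the preorder induced by C), or (ii) T is continuous and additive on C. Then there exists x ∈ C such that r_x(T) = r(T). -/

import Mathlib

open Filter Topology Bornology Pointwise

variable {X : Type*}

section ConeDefs

variable [NormedAddCommGroup X] [NormedSpace ℝ X]

/-- `C` is a cone (with vertex `0`): `tC ⊆ C` for all `t ≥ 0`. -/
def IsCone (C : Set X) : Prop :=
  ∀ t : ℝ, 0 ≤ t → ∀ x ∈ C, t • x ∈ C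

/-- `T` is positively homogeneous (of degree 1) on `C`. -/
def PosHomOn (C : Set X) (T : X → X) : Prop :=
  ∀ t : ℝ, 0 ≤ t → ∀ x ∈ C, T (t • x) = t • T x

/-- `T` is Lipschitz on `C`. -/
def LipschitzOnCone (C : Set X) (T : X → X) : Prop :=
  ∃ L : ℝ, 0 < L ∧ ∀ x ∈ C, ∀ y ∈ C, ‖T x - T y‖ ≤ L * ‖x - y‖

/-- `T` is bounded on `C`: the set of ratios `‖T x‖/‖x‖` (over nonzero `x ∈ C`)
is bounded above. -/
def BoundedOnCone (C : Set X) (T : X → X) : Prop :=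
  BddAbove {r : ℝ | ∃ x ∈ C, x ≠ 0 ∧ r = ‖T x‖ / ‖x‖}

/-- The norm `‖T‖ = sup {‖T x‖/‖x‖ : x ∈ C, x ≠ 0}` of `T` on the cone `C`. -/
noncomputable def coneNorm (C : Set X) (T : X → X) : ℝ :=
  sSup {r : ℝ | ∃ x ∈ C, x ≠ 0 ∧ r = ‖T x‖ / ‖x‖}

/-- The Bonsall cone spectral radius `r(T) = lim_n ‖Tⁿ‖^{1/n} = inf_n ‖Tⁿ‖^{1/n}`
of `T` on the cone `C` (the limit exists and equals the infimum by submultiplicativity). -/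
noncomputable def coneRadius (C : Set X) (T : X → X) : ℝ :=
  ⨅ n : ℕ, (coneNorm C (T^[n + 1])) ^ ((1 : ℝ) / (n + 1))

/-- The local cone spectral radius `r_x(T) = limsup_n ‖Tⁿ x‖^{1/n}`. -/
noncomputable def localRadius (C : Set X) (T : X → X) (x : X) : ℝ :=
  Filter.limsup (fun n : ℕ => ‖T^[n] x‖ ^ ((1 : ℝ) / n)) Filter.atTop

/-- The approximate point spectrum of `T` on the cone `C`: all `s ≥ 0` with
`inf {‖T x - s x‖ : x ∈ C, ‖x‖ = 1} = 0`. -/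
def apSpectrum (C : Set X) (T : X → X) : Set ℝ :=
  {s : ℝ | 0 ≤ s ∧ ∀ ε : ℝ, 0 < ε → ∃ x ∈ C, ‖x‖ = 1 ∧ ‖T x - s • x‖ < ε}

end ConeDefs

section WedgeDefs

variable [NormedAddCommGroup X] [NormedSpace ℝ X]

/-- A wedge: a convex cone, i.e. `tC ⊆ C` for `t ≥ 0` and `C + C ⊆ C`. -/
def IsWedge (C : Set X) : Prop :=
  IsCone C ∧ ∀ x ∈ C, ∀ y ∈ C, x + y ∈ C

/-- A normal wedge: a wedge such that for some `M > 0`, `‖x‖ ≤ M ‖y‖` whenever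
`x, y ∈ C` and `y - x ∈ C`. -/
def IsNormalWedge (C : Set X) : Prop :=
  IsWedge C ∧ ∃ M : ℝ, 0 < M ∧ ∀ x ∈ C, ∀ y ∈ C, y - x ∈ C → ‖x‖ ≤ M * ‖y‖

/-- `T` is additive on `C`. -/
def AdditiveOn (C : Set X) (T : X → X) : Prop :=
  ∀ x ∈ C, ∀ y ∈ C, T (x + y) = T x + T y

end WedgeDefs

section AuxLemmas

theorem aux_tendsto_rpow_one_div (A : ℝ) (hA : 0 < A) :
    Tendsto (fun n : ℕ => A ^ ((1:ℝ)/n)) atTop (𝓝 1) := by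
  have h0 : Tendsto (fun n : ℕ => Real.log A * ((1:ℝ)/n)) atTop (𝓝 0) := by
    simpa using (tendsto_one_div_atTop_nhds_zero_nat).const_mul (Real.log A)
  have h1 := (Real.continuous_exp.tendsto 0).comp h0
  simp only [Function.comp_def, Real.exp_zero] at h1
  refine h1.congr fun n => ?_
  rw [Real.rpow_def_of_pos hA]

theorem aux_tendsto_nat_rpow : Tendsto (fun n : ℕ => ((n:ℝ)) ^ ((1:ℝ)/(n:ℝ))) atTop (𝓝 1) :=
  tendsto_rpow_div.comp tendsto_natCast_atTop_atTop

end AuxLemmas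

set_option maxHeartbeats 2000000 in
/-- **Proposition 4.6.** Let `X` be a normed space and `C ⊆ X` a non-zero normal wedge
which is complete in the norm topology. Let `T : C → C` be bounded and positively
homogeneous, and suppose that either (i) `T` is monotone on `C` (with respect to the
preorder induced by `C`), or (ii) `T` is continuous and additive on `C`. Then there
exists `x ∈ C` with `r_x(T) = r(T)`. -/
theorem exists_localRadius_eq_coneRadius_wedge [NormedAddCommGroup X] [NormedSpace ℝ X]
    (C : Set X) (hC : IsNormalWedge C) (hCne : ∃ x ∈ C, x ≠ 0)
    (hCcomplete : IsComplete C)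
    (T : X → X) (hTC : Set.MapsTo T C C)
    (hbdd : BoundedOnCone C T) (hhom : PosHomOn C T)
    (hT : (∀ x ∈ C, ∀ y ∈ C, y - x ∈ C → T y - T x ∈ C) ∨
      (ContinuousOn T C ∧ AdditiveOn C T)) :
    ∃ x ∈ C, localRadius C T x = coneRadius C T := by
  obtain ⟨⟨hcone, haddC⟩, M, hM, hnormal⟩ := hC
  have hMden : ∀ z : ℝ, 0 < z → (0:ℝ) < 2 * (M * z) :=
    fun z hz => mul_pos two_pos (mul_pos hM hz)
  obtain ⟨x₀, hx₀C, hx₀⟩ := hCne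
  have h0C : (0:X) ∈ C := by simpa using hcone 0 le_rfl x₀ hx₀C
  have hT0 : T 0 = 0 := by simpa using hhom 0 le_rfl x₀ hx₀C
  have hiterM : ∀ n : ℕ, Set.MapsTo T^[n] C C := fun n => hTC.iterate n
  have hiterHom : ∀ n : ℕ, ∀ t : ℝ, 0 ≤ t → ∀ y ∈ C, T^[n] (t • y) = t • T^[n] y := by
    intro n
    induction n with
    | zero => intro t ht y hy; simp
    | succ n ih =>
      intro t ht y hy
      rw [Function.iterate_succ_apply', Function.iterate_succ_apply', ih t ht y hy,
        hhom t ht _ (hiterM n hy)]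
  set c : ℕ → ℝ := fun n => coneNorm C (T^[n]) with hcdef
  have hcS : ∀ n, c n = sSup {r : ℝ | ∃ y ∈ C, y ≠ 0 ∧ r = ‖T^[n] y‖ / ‖y‖} := fun n => rfl
  have hSne : ∀ n : ℕ, ({r : ℝ | ∃ y ∈ C, y ≠ 0 ∧ r = ‖T^[n] y‖ / ‖y‖}).Nonempty :=
    fun n => ⟨_, x₀, hx₀C, hx₀, rfl⟩
  have hbdd1 : BddAbove {r : ℝ | ∃ y ∈ C, y ≠ 0 ∧ r = ‖T y‖ / ‖y‖} := hbdd
  set N : ℝ := coneNorm C T with hNdef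
  have hTle : ∀ y ∈ C, ‖T y‖ ≤ N * ‖y‖ := by
    intro y hy
    rcases eq_or_ne y 0 with rfl | hy0
    · simp [hT0]
    · have h1 : ‖T y‖ / ‖y‖ ≤ N := le_csSup hbdd1 ⟨y, hy, hy0, rfl⟩
      rwa [div_le_iff₀ (norm_pos_iff.2 hy0)] at h1
  have hN0 : 0 ≤ N := le_trans (by positivity) (le_csSup hbdd1 ⟨x₀, hx₀C, hx₀, rfl⟩)
  have hiterLe : ∀ n : ℕ, ∀ y ∈ C, ‖T^[n] y‖ ≤ N^n * ‖y‖ := by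
    intro n
    induction n with
    | zero => intro y hy; simp
    | succ n ih =>
      intro y hy
      rw [Function.iterate_succ_apply']
      calc ‖T (T^[n] y)‖ ≤ N * ‖T^[n] y‖ := hTle _ (hiterM n hy)
        _ ≤ N * (N^n * ‖y‖) := mul_le_mul_of_nonneg_left (ih y hy) hN0
        _ = N^(n+1) * ‖y‖ := by ring
  have hbddn : ∀ n : ℕ, BddAbove {r : ℝ | ∃ y ∈ C, y ≠ 0 ∧ r = ‖T^[n] y‖ / ‖y‖} := by
    intro n
    refine ⟨N^n, ?_⟩
    rintro r ⟨y, hy, hy0, rfl⟩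
    rw [div_le_iff₀ (norm_pos_iff.2 hy0)]
    exact hiterLe n y hy
  have hiter0 : ∀ n : ℕ, T^[n] (0:X) = 0 := fun n => Function.iterate_fixed hT0 n
  have hcle : ∀ n : ℕ, ∀ y ∈ C, ‖T^[n] y‖ ≤ c n * ‖y‖ := by
    intro n y hy
    rcases eq_or_ne y 0 with rfl | hy0
    · simp [hiter0 n]
    · have h1 : ‖T^[n] y‖ / ‖y‖ ≤ c n := le_csSup (hbddn n) ⟨y, hy, hy0, rfl⟩
      rwa [div_le_iff₀ (norm_pos_iff.2 hy0)] at h1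
  have hcnonneg : ∀ n : ℕ, 0 ≤ c n :=
    fun n => le_trans (by positivity) (le_csSup (hbddn n) ⟨x₀, hx₀C, hx₀, rfl⟩)
  have hdiff : ∀ n : ℕ, ∀ p ∈ C, ∀ q ∈ C, q - p ∈ C → T^[n] q - T^[n] p ∈ C := by
    rcases hT with hmono | ⟨_, hAdd⟩
    · intro n
      induction n with
      | zero => intro p _ q _ h; simpa using h
      | succ n ih =>
        intro p hp q hq h
        rw [Function.iterate_succ_apply', Function.iterate_succ_apply']
        exact hmono _ (hiterM n hp) _ (hiterM n hq) (ih p hp q hq h)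
    · have hiterAdd : ∀ n : ℕ, ∀ p ∈ C, ∀ q ∈ C, T^[n] (p + q) = T^[n] p + T^[n] q := by
        intro n
        induction n with
        | zero => intro p _ q _; simp
        | succ n ih =>
          intro p hp q hq
          rw [Function.iterate_succ_apply', Function.iterate_succ_apply',
            Function.iterate_succ_apply', ih p hp q hq,
            hAdd _ (hiterM n hp) _ (hiterM n hq)]
      intro n p hp q hq h
      have h1 : (q - p) + p = q := by abel
      have h2 := hiterAdd n (q - p) h p hp
      rw [h1] at h2
      have h3 : T^[n] q - T^[n] p = T^[n] (q - p) := by rw [h2]; abel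
      rw [h3]
      exact hiterM n h
  set r : ℝ := coneRadius C T with hrdef0
  have hrdef : r = ⨅ n : ℕ, (c (n+1)) ^ ((1:ℝ)/(n+1)) := rfl
  clear_value c
  have hterm_nonneg : ∀ n : ℕ, 0 ≤ (c (n+1)) ^ ((1:ℝ)/((n:ℝ)+1)) :=
    fun n => Real.rpow_nonneg (hcnonneg _) _
  have hbddBelow : BddBelow (Set.range fun n : ℕ => (c (n+1)) ^ ((1:ℝ)/((n:ℝ)+1))) := by
    refine ⟨0, ?_⟩; rintro _ ⟨n, rfl⟩; exact hterm_nonneg n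
  have hrle : ∀ n : ℕ, r ≤ (c (n+1)) ^ ((1:ℝ)/((n:ℝ)+1)) := by
    intro n
    rw [hrdef]
    exact ciInf_le hbddBelow n
  have hrnonneg : 0 ≤ r := by rw [hrdef]; exact le_ciInf hterm_nonneg
  clear_value r
  by_cases hrpos : 0 < r
  swap
  · refine ⟨0, h0C, ?_⟩
    have hloc : localRadius C T 0 = 0 := by
      unfold localRadius
      have hev : (fun n : ℕ => ‖T^[n] (0:X)‖ ^ ((1:ℝ)/n)) =ᶠ[atTop] (fun _ => (0:ℝ)) := by
        filter_upwards [eventually_ge_atTop 1] with n hn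
        rw [hiter0 n, norm_zero, Real.zero_rpow]
        exact one_div_ne_zero (Nat.cast_ne_zero.2 (by omega))
      rw [limsup_congr hev, limsup_const]
    rw [hloc]
    linarith [hrnonneg, not_lt.1 hrpos]
  · have hcpos : ∀ n : ℕ, 0 < c (n+1) := by
      intro n
      rcases (hcnonneg (n+1)).lt_or_eq with h | h
      · exact h
      · exfalso
        have h1 := hrle n
        rw [← h, Real.zero_rpow (one_div_ne_zero (by positivity))] at h1
        linarith
    have hpick : ∀ n : ℕ, ∃ u, u ∈ C ∧ ‖u‖ = 1 ∧ c (n+1) / 2 < ‖T^[n+1] u‖ := by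
      intro n
      obtain ⟨s, hsS, hs⟩ := exists_lt_of_lt_csSup (hSne (n+1))
        (show c (n+1) / 2 < sSup _ from by rw [← hcS]; exact half_lt_self (hcpos n))
      obtain ⟨y, hyC, hy0, rfl⟩ := hsS
      have hyn : (0:ℝ) < ‖y‖ := norm_pos_iff.2 hy0
      refine ⟨‖y‖⁻¹ • y, hcone _ (by positivity) y hyC, ?_, ?_⟩
      · rw [norm_smul, Real.norm_of_nonneg (by positivity), inv_mul_cancel₀ hyn.ne']
      · rw [hiterHom (n+1) _ (by positivity) y hyC, norm_smul,
          Real.norm_of_nonneg (by positivity)]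
        rwa [div_eq_inv_mul ‖T^[n+1] y‖ ‖y‖] at hs
    choose u huC hu1 hugt using hpick
    set w : ℕ → X := fun n => (((n:ℝ)+1)^2)⁻¹ • u n with hwdef
    have hwC : ∀ n, w n ∈ C := fun n => hcone _ (by positivity) _ (huC n)
    have hwnorm : ∀ n, ‖w n‖ = (((n:ℝ)+1)^2)⁻¹ := by
      intro n
      rw [hwdef]
      simp only
      rw [norm_smul, Real.norm_of_nonneg (by positivity), hu1, mul_one]
    have hnormsum : Summable (fun n : ℕ => ‖w n‖) := by
      have h1 : Summable (fun n : ℕ => 1/((n:ℝ))^2) :=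
        Real.summable_one_div_nat_pow.mpr one_lt_two
      have h2 : Summable (fun n : ℕ => 1/(((n + 1 : ℕ)):ℝ)^2) :=
        (summable_nat_add_iff (f := fun n : ℕ => 1/((n:ℝ))^2) 1).mpr h1
      have h3 : Summable (fun n : ℕ => (((n:ℝ)+1)^2)⁻¹) := by
        refine h2.congr fun n => ?_
        push_cast
        rw [one_div]
      exact h3.congr fun n => (hwnorm n).symm
    set s : ℕ → X := fun m => ∑ i ∈ Finset.range m, w i with hsdef
    have hsC : ∀ m, s m ∈ C := by
      intro m
      induction m with
      | zero => simpa [hsdef] using h0C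
      | succ m ih =>
        rw [hsdef]
        simp only
        rw [Finset.sum_range_succ]
        exact haddC _ (by simpa [hsdef] using ih) _ (hwC m)
    have hcauchy : CauchySeq s :=
      cauchySeq_range_of_norm_bounded hnormsum.hasSum.tendsto_sum_nat.cauchySeq
        (fun i => le_rfl)
    obtain ⟨x, hxC, hxtend⟩ := cauchySeq_tendsto_of_isComplete hCcomplete hsC hcauchy
    have hclosed : IsClosed C := hCcomplete.isClosed
    have hxsubC : ∀ n, x - w n ∈ C := by
      intro n
      have htend : Tendsto (fun m => s m - w n) atTop (𝓝 (x - w n)) := hxtend.sub_const _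
      refine hclosed.mem_of_tendsto htend ?_
      filter_upwards [eventually_ge_atTop (n+1)] with m hm
      have hnmem : n ∈ Finset.range m := Finset.mem_range.2 (by omega)
      have he : s m - w n = ∑ i ∈ (Finset.range m).erase n, w i := by
        rw [hsdef]
        simp only
        rw [eq_comm, eq_sub_iff_add_eq]
        exact Finset.sum_erase_add _ _ hnmem
      rw [he]
      refine Finset.sum_induction _ (· ∈ C) (fun a b ha hb => haddC a ha b hb) h0C ?_
      exact fun i _ => hwC i
    have hxpos : 0 < ‖x‖ := by
      have h1 : ‖w 0‖ ≤ M * ‖x‖ := hnormal _ (hwC 0) _ hxC (hxsubC 0)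
      have h2 : ‖w 0‖ = 1 := by rw [hwnorm]; norm_num
      nlinarith [norm_nonneg x]
    have hlow : ∀ n : ℕ, c (n+1) / (2 * (M * ((n:ℝ)+1)^2)) ≤ ‖T^[n+1] x‖ := by
      intro n
      have hdC : T^[n+1] x - T^[n+1] (w n) ∈ C :=
        hdiff (n+1) (w n) (hwC n) x hxC (hxsubC n)
      have h1 : ‖T^[n+1] (w n)‖ ≤ M * ‖T^[n+1] x‖ :=
        hnormal _ (hiterM (n+1) (hwC n)) _ (hiterM (n+1) hxC) hdC
      have h2 : ‖T^[n+1] (w n)‖ = (((n:ℝ)+1)^2)⁻¹ * ‖T^[n+1] (u n)‖ := by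
        rw [hwdef]
        simp only
        rw [hiterHom (n+1) _ (by positivity) _ (huC n), norm_smul,
          Real.norm_of_nonneg (by positivity)]
      have h3 := hugt n
      have hα : (0:ℝ) < ((n:ℝ)+1)^2 := by positivity
      rw [h2] at h1
      have h4 : ‖T^[n+1] (u n)‖ ≤ ((n:ℝ)+1)^2 * (M * ‖T^[n+1] x‖) := by
        rwa [inv_mul_le_iff₀ hα] at h1
      rw [div_le_iff₀ (hMden _ hα)]
      nlinarith
    set f : ℕ → ℝ := fun n => ‖T^[n] x‖ ^ ((1:ℝ)/n) with hfdef
    have hfnonneg : ∀ n, 0 ≤ f n := fun n => Real.rpow_nonneg (norm_nonneg _) _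
    set B : ℝ := max 1 (N * max 1 ‖x‖) with hBdef
    have hfbdd : ∀ n : ℕ, f n ≤ B := by
      intro n
      rcases Nat.eq_zero_or_pos n with rfl | hn
      · have h0 : f 0 = 1 := by
          rw [hfdef]; simp
        rw [h0, hBdef]; exact le_max_left _ _
      · have hne : ((n:ℝ)) ≠ 0 := Nat.cast_ne_zero.2 hn.ne'
        have h1 : f n ≤ (N^n * ‖x‖) ^ ((1:ℝ)/n) :=
          Real.rpow_le_rpow (norm_nonneg _) (hiterLe n x hxC) (by positivity)
        have h2 : (N^n * ‖x‖) ^ ((1:ℝ)/n) = N * ‖x‖ ^ ((1:ℝ)/n) := by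
          rw [Real.mul_rpow (pow_nonneg hN0 n) (norm_nonneg _), ← Real.rpow_natCast N n,
            ← Real.rpow_mul hN0, mul_one_div, div_self hne, Real.rpow_one]
        have h3 : ‖x‖ ^ ((1:ℝ)/n) ≤ max 1 ‖x‖ := by
          rcases le_total ‖x‖ 1 with h | h
          · exact le_trans (Real.rpow_le_one (norm_nonneg _) h (by positivity)) (le_max_left _ _)
          · refine le_trans ?_ (le_max_right _ _)
            have h4 : (1:ℝ)/n ≤ 1 := by
              rw [div_le_one (by positivity)]
              exact_mod_cast hn
            calc ‖x‖ ^ ((1:ℝ)/n) ≤ ‖x‖ ^ (1:ℝ) :=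
                  Real.rpow_le_rpow_of_exponent_le h h4
              _ = ‖x‖ := Real.rpow_one _
        calc f n ≤ N * ‖x‖ ^ ((1:ℝ)/n) := by rw [← h2]; exact h1
          _ ≤ N * max 1 ‖x‖ := mul_le_mul_of_nonneg_left h3 hN0
          _ ≤ B := le_max_right _ _
    have hfBddUnder : IsBoundedUnder (· ≤ ·) atTop f :=
      ⟨B, Filter.eventually_map.2 (Eventually.of_forall hfbdd)⟩
    have hfCobdd : IsCoboundedUnder (· ≤ ·) atTop f :=
      isCoboundedUnder_le_of_le atTop hfnonneg
    have hγ : Tendsto (fun m : ℕ => ((2 * (M * ((m:ℝ))^2))⁻¹) ^ ((1:ℝ)/m)) atTop (𝓝 1) := by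
      have h2M : Tendsto (fun m : ℕ => ((2*M)⁻¹) ^ ((1:ℝ)/m)) atTop (𝓝 1) :=
        aux_tendsto_rpow_one_div _ (inv_pos.2 (mul_pos two_pos hM))
      have hnn : Tendsto (fun m : ℕ => (((m:ℝ))⁻¹) ^ ((1:ℝ)/m)) atTop (𝓝 1) := by
        have h1 : Tendsto (fun m : ℕ => (((m:ℝ)) ^ ((1:ℝ)/m))⁻¹) atTop (𝓝 1) := by
          simpa using aux_tendsto_nat_rpow.inv₀ one_ne_zero
        refine h1.congr' ?_
        filter_upwards [eventually_ge_atTop 1] with m hm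
        have hm0 : (0:ℝ) ≤ (m:ℝ) := by positivity
        rw [← Real.inv_rpow hm0]
      have hmul := (h2M.mul hnn).mul hnn
      rw [show ((1:ℝ) * 1) * 1 = 1 by ring] at hmul
      refine hmul.congr' ?_
      filter_upwards [eventually_ge_atTop 1] with m hm
      have hm0 : (0:ℝ) < (m:ℝ) := by exact_mod_cast hm
      rw [← Real.mul_rpow (inv_nonneg.2 (mul_pos two_pos hM).le) (inv_nonneg.2 hm0.le),
        ← Real.mul_rpow (mul_nonneg (inv_nonneg.2 (mul_pos two_pos hM).le) (inv_nonneg.2 hm0.le)) (inv_nonneg.2 hm0.le)]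
      congr 1
      field_simp
    have hge : r ≤ limsup f atTop := by
      by_contra hcon
      push_neg at hcon
      obtain ⟨b, hb1, hb2⟩ := exists_between hcon
      have h1 : Tendsto (fun m : ℕ => r * ((2 * (M * ((m:ℝ))^2))⁻¹) ^ ((1:ℝ)/m))
          atTop (𝓝 r) := by simpa using hγ.const_mul r
      have h2 : ∀ᶠ m : ℕ in atTop,
          b < r * ((2 * (M * ((m:ℝ))^2))⁻¹) ^ ((1:ℝ)/m) :=
        h1.eventually (eventually_gt_nhds hb2)
      have h3 : ∀ᶠ m : ℕ in atTop,
          r * ((2 * (M * ((m:ℝ))^2))⁻¹) ^ ((1:ℝ)/m) ≤ f m := by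
        filter_upwards [eventually_ge_atTop 1] with m hm
        obtain ⟨k, rfl⟩ : ∃ k, m = k + 1 := ⟨m - 1, by omega⟩
        have hcast : ((k+1:ℕ):ℝ) = (k:ℝ)+1 := by push_cast; ring
        have hlow' : c (k+1) * (2 * (M * ((k:ℝ)+1)^2))⁻¹ ≤ ‖T^[k+1] x‖ := by
          rw [← div_eq_mul_inv]; exact hlow k
        have e1 : (c (k+1) * (2 * (M * ((k:ℝ)+1)^2))⁻¹) ^ ((1:ℝ)/((k:ℝ)+1))
            ≤ ‖T^[k+1] x‖ ^ ((1:ℝ)/((k:ℝ)+1)) :=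
          Real.rpow_le_rpow
            (mul_nonneg (hcnonneg _) (inv_nonneg.2 (hMden _ (by positivity)).le))
            hlow' (by positivity)
        have e2 : (c (k+1) * (2 * (M * ((k:ℝ)+1)^2))⁻¹) ^ ((1:ℝ)/((k:ℝ)+1))
            = c (k+1) ^ ((1:ℝ)/((k:ℝ)+1)) * ((2 * (M * ((k:ℝ)+1)^2))⁻¹) ^ ((1:ℝ)/((k:ℝ)+1)) :=
          Real.mul_rpow (hcnonneg _) (inv_nonneg.2 (hMden _ (by positivity)).le)
        have e3 : r * ((2 * (M * ((k:ℝ)+1)^2))⁻¹) ^ ((1:ℝ)/((k:ℝ)+1))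
            ≤ c (k+1) ^ ((1:ℝ)/((k:ℝ)+1)) * ((2 * (M * ((k:ℝ)+1)^2))⁻¹) ^ ((1:ℝ)/((k:ℝ)+1)) :=
          mul_le_mul_of_nonneg_right (hrle k)
            (Real.rpow_nonneg (inv_nonneg.2 (hMden _ (by positivity)).le) _)
        have e4 : r * ((2 * (M * ((k:ℝ)+1)^2))⁻¹) ^ ((1:ℝ)/((k:ℝ)+1))
            ≤ ‖T^[k+1] x‖ ^ ((1:ℝ)/((k:ℝ)+1)) := by
          rw [← e2] at e3
          exact e3.trans e1
        rw [hfdef]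
        simp only [hcast]
        exact e4
      have h4 : ∃ᶠ m in atTop, b ≤ f m :=
        ((h2.and h3).mono fun m hm => le_trans hm.1.le hm.2).frequently
      exact absurd (le_limsup_of_frequently_le h4 hfBddUnder) (not_le.2 hb1)
    have hle : limsup f atTop ≤ r := by
      rw [hrdef]
      refine le_ciInf fun n => ?_
      have hkpos : 0 < n + 1 := Nat.succ_pos n
      set k : ℕ := n + 1 with hkdef
      set a : ℝ := c k with hadef
      have ha : 0 < a := hcpos n
      have ha2 : ∀ y ∈ C, ‖T^[k] y‖ ≤ a * ‖y‖ := by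
        intro y hy
        rw [hadef]
        exact hcle k y hy
      clear_value a
      have hrne : (Finset.range k).Nonempty := Finset.nonempty_range_iff.mpr hkpos.ne'
      set D : ℝ := (Finset.range k).sup' hrne (fun j => ‖T^[j] x‖) with hDdef
      have hDge : ∀ j, j < k → ‖T^[j] x‖ ≤ D := by
        intro j hj
        rw [hDdef]
        exact Finset.le_sup' (fun i => ‖T^[i] x‖) (Finset.mem_range.2 hj)
      have hDpos : 0 < D := lt_of_lt_of_le hxpos (by simpa using hDge 0 hkpos)
      clear_value D
      have hq : ∀ q : ℕ, ∀ j : ℕ, j < k → ‖T^[q * k + j] x‖ ≤ a ^ q * ‖T^[j] x‖ := by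
        intro q
        induction q with
        | zero => intro j hj; simp
        | succ q ih =>
          intro j hj
          have heq : (q+1) * k + j = k + (q * k + j) := by ring
          rw [heq, Function.iterate_add_apply]
          calc ‖T^[k] (T^[q*k+j] x)‖ ≤ a * ‖T^[q*k+j] x‖ :=
                ha2 _ (hiterM (q*k+j) hxC)
            _ ≤ a * (a^q * ‖T^[j] x‖) := mul_le_mul_of_nonneg_left (ih j hj) ha.le
            -- end calc
            _ = a^(q+1) * ‖T^[j] x‖ := by ring
      have hsub : ∀ m : ℕ, ‖T^[m] x‖ ≤ a ^ (m / k) * D := by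
        intro m
        have h1 := hq (m / k) (m % k) (Nat.mod_lt m hkpos)
        rw [Nat.div_add_mod' m k] at h1
        exact h1.trans (mul_le_mul_of_nonneg_left (hDge _ (Nat.mod_lt m hkpos))
          (pow_nonneg ha.le _))
      set E : ℝ := max 1 a⁻¹ with hEdef
      have hE1 : (1:ℝ) ≤ E := le_max_left _ _
      have hE2 : a⁻¹ ≤ E := le_max_right _ _
      clear_value E
      have hfm : ∀ m : ℕ, 1 ≤ m → f m ≤ a ^ ((1:ℝ)/(k:ℝ)) * (E * D) ^ ((1:ℝ)/m) := by
        intro m hm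
        have hm0 : (0:ℝ) < (m:ℝ) := by exact_mod_cast hm
        have hk0 : (0:ℝ) < (k:ℝ) := by exact_mod_cast hkpos
        set q : ℕ := m / k with hqdef
        have h1 : f m ≤ (a ^ q * D) ^ ((1:ℝ)/m) :=
          Real.rpow_le_rpow (norm_nonneg _) (hsub m) (by positivity)
        have h2 : (a ^ q * D) ^ ((1:ℝ)/m) = a ^ ((q:ℝ)/m) * D ^ ((1:ℝ)/m) := by
          rw [Real.mul_rpow (pow_nonneg ha.le q) hDpos.le, ← Real.rpow_natCast a q,
            ← Real.rpow_mul ha.le, mul_one_div]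
        have key : a ^ ((q:ℝ)/(m:ℝ)) ≤ a ^ ((1:ℝ)/(k:ℝ)) * E ^ ((1:ℝ)/(m:ℝ)) := by
          rcases le_total 1 a with hA | hA
          · have hqm : (q:ℝ)/(m:ℝ) ≤ 1/(k:ℝ) := by
              rw [div_le_div_iff₀ hm0 hk0, one_mul]
              exact_mod_cast Nat.div_mul_le_self m k
            calc a ^ ((q:ℝ)/(m:ℝ)) ≤ a ^ ((1:ℝ)/(k:ℝ)) :=
                Real.rpow_le_rpow_of_exponent_le hA hqm
              _ ≤ a ^ ((1:ℝ)/(k:ℝ)) * E ^ ((1:ℝ)/(m:ℝ)) := by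
                  refine le_mul_of_one_le_right (Real.rpow_nonneg ha.le _) ?_
                  calc (1:ℝ) = 1 ^ ((1:ℝ)/(m:ℝ)) := (Real.one_rpow _).symm
                    _ ≤ E ^ ((1:ℝ)/(m:ℝ)) := Real.rpow_le_rpow zero_le_one hE1 (by positivity)
          · have hmlt : (m:ℝ) < (q:ℝ) * (k:ℝ) + (k:ℝ) := by
              exact_mod_cast Nat.lt_div_mul_add hkpos
            have h5 : (1:ℝ)/(k:ℝ) ≤ ((q:ℝ)+1)/(m:ℝ) := by
              rw [div_le_div_iff₀ hk0 hm0]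
              nlinarith
            have hqm : (1:ℝ)/(k:ℝ) - 1/(m:ℝ) ≤ (q:ℝ)/(m:ℝ) := by
              have h6 : ((q:ℝ)+1)/(m:ℝ) - 1/(m:ℝ) = (q:ℝ)/(m:ℝ) := by
                rw [div_sub_div_same]
                norm_num
              linarith
            have h7 : a ^ ((q:ℝ)/(m:ℝ)) ≤ a ^ ((1:ℝ)/(k:ℝ) - 1/(m:ℝ)) :=
              Real.rpow_le_rpow_of_exponent_ge ha hA hqm
            have h8 : a ^ ((1:ℝ)/(k:ℝ) - 1/(m:ℝ))
                = a ^ ((1:ℝ)/(k:ℝ)) * (a⁻¹) ^ ((1:ℝ)/(m:ℝ)) := by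
              rw [Real.rpow_sub ha, div_eq_mul_inv, Real.inv_rpow ha.le]
            have h9 : (a⁻¹) ^ ((1:ℝ)/(m:ℝ)) ≤ E ^ ((1:ℝ)/(m:ℝ)) :=
              Real.rpow_le_rpow (inv_nonneg.2 ha.le) hE2 (by positivity)
            calc a ^ ((q:ℝ)/(m:ℝ)) ≤ a ^ ((1:ℝ)/(k:ℝ)) * (a⁻¹) ^ ((1:ℝ)/(m:ℝ)) := by
                  rw [← h8]; exact h7
              _ ≤ a ^ ((1:ℝ)/(k:ℝ)) * E ^ ((1:ℝ)/(m:ℝ)) :=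
                  mul_le_mul_of_nonneg_left h9 (Real.rpow_nonneg ha.le _)
        calc f m ≤ a ^ ((q:ℝ)/(m:ℝ)) * D ^ ((1:ℝ)/m) := by rw [← h2]; exact h1
          _ ≤ (a ^ ((1:ℝ)/(k:ℝ)) * E ^ ((1:ℝ)/(m:ℝ))) * D ^ ((1:ℝ)/m) :=
              mul_le_mul_of_nonneg_right key (Real.rpow_nonneg hDpos.le _)
          _ = a ^ ((1:ℝ)/(k:ℝ)) * (E * D) ^ ((1:ℝ)/m) := by
              rw [Real.mul_rpow (zero_le_one.trans hE1) hDpos.le]; ring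
      have hED : (0:ℝ) < E * D := mul_pos (lt_of_lt_of_le one_pos hE1) hDpos
      have htends : Tendsto (fun m : ℕ => a ^ ((1:ℝ)/(k:ℝ)) * (E*D) ^ ((1:ℝ)/m)) atTop
          (𝓝 (a ^ ((1:ℝ)/(k:ℝ)))) := by
        simpa using (aux_tendsto_rpow_one_div _ hED).const_mul (a ^ ((1:ℝ)/(k:ℝ)))
      have hexp : (1:ℝ)/(k:ℝ) = 1/((n:ℝ)+1) := by rw [hkdef]; push_cast; ring
      rw [← hexp]
      refine le_of_forall_gt_imp_ge_of_dense fun b hb => ?_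
      have hev : ∀ᶠ m in atTop, f m ≤ b := by
        filter_upwards [eventually_ge_atTop 1, htends.eventually (eventually_lt_nhds hb)]
          with m h1 h2
        exact (hfm m h1).trans h2.le
      exact limsup_le_of_le hfCobdd hev
    refine ⟨x, hxC, ?_⟩
    unfold localRadius
    rw [← hfdef]
    exact le_antisymm hle hge
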